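/- (Greedy is not optimal) Consider the two-item instance with base utilities v 1 = 1, v 2 = 10 and boredom coefficients α 1 = 0, α 2 = 10, and any decay rate r ∈ (0, 2/9). Then: (a) every greedy selection sequence x satisfies limsup_{T→∞} (1/T)·∑_{t=0}^{T−1} u (x t) t ≤ 1 + 9r; (b) the alternating selection sequence y (with y t = item 2 when t is even and y t = item 1 when t is odd) satisfies liminf_{T→∞} (1/T)·∑_{t=0}^{T−1} u (y t) t ≥ (1/2)·(1 + 10 − 10·(1−r)/(2−r)) ≥ 3. In particular the greedy strategy does not maximize long-run average utility. -/

import Mathlib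

open Filter Finset Topology

/-- The memory of item `i` at time `t`, given decay rate `r` and selection sequence `x`. -/
def memory {n : ℕ} (r : ℝ) (x : ℕ → Fin n) (i : Fin n) : ℕ → ℝ
  | 0 => 0
  | t + 1 => (1 - r) * memory r x i t + r * (if x t = i then 1 else 0)

lemma memory_nonneg {n : ℕ} {r : ℝ} (hr0 : 0 ≤ r) (hr1 : r ≤ 1) (x : ℕ → Fin n) (i : Fin n) :
    ∀ t, 0 ≤ memory r x i t
  | 0 => le_refl 0
  | (t + 1) => by
    have ih := memory_nonneg hr0 hr1 x i t
    have h : (0:ℝ) ≤ (if x t = i then (1:ℝ) else 0) := by split <;> norm_num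
    simp only [memory]
    nlinarith

lemma fin2cases (i : Fin 2) : i = 0 ∨ i = 1 := by fin_cases i <;> simp

/-- (Greedy is not optimal) For the two-item instance `v = (1, 10)`, `α = (0, 10)` and any
`r ∈ (0, 2/9)`: (a) every greedy selection has long-run average utility (limsup) at most
`1 + 9r`; (b) the alternating selection `y` (item `1` at even times, item `0` at odd
times) has long-run average utility (liminf) at least `(1/2)·(1 + 10 − 10(1−r)/(2−r)) ≥ 3`;
and `1 + 9r < 3`, so greedy does not maximize long-run average utility. -/
theorem greedy_not_optimal (r : ℝ) (hr0 : 0 < r) (hr' : r < 2 / 9)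
    (v α : Fin 2 → ℝ) (hv0 : v 0 = 1) (hv1 : v 1 = 10)
    (hα0 : α 0 = 0) (hα1 : α 1 = 10) :
    (∀ x : ℕ → Fin 2,
      (∀ t : ℕ, ∀ i : Fin 2,
        v i - α i * memory r x i t ≤ v (x t) - α (x t) * memory r x (x t) t) →
      Filter.limsup
        (fun T : ℕ =>
          (∑ t ∈ Finset.range T, (v (x t) - α (x t) * memory r x (x t) t)) / (T : ℝ))
        Filter.atTop ≤ 1 + 9 * r) ∧
    (∀ y : ℕ → Fin 2, (∀ t : ℕ, y t = if Even t then 1 else 0) →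
      (1 / 2) * (1 + 10 - 10 * (1 - r) / (2 - r)) ≤
      Filter.liminf
        (fun T : ℕ =>
          (∑ t ∈ Finset.range T, (v (y t) - α (y t) * memory r y (y t) t)) / (T : ℝ))
        Filter.atTop) ∧
    ((3 : ℝ) ≤ (1 / 2) * (1 + 10 - 10 * (1 - r) / (2 - r))) ∧
    (1 + 9 * r < 3) := by
  have h1r : 0 < 1 - r := by linarith
  have h1r' : 1 - r < 1 := by linarith
  have h2r : 0 < 2 - r := by linarith
  have hq2 : 10 * (1 - r) / (2 - r) ≤ 5 := by
    rw [div_le_iff₀ h2r]; linarith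
  refine ⟨?_, ?_, by linarith, by linarith⟩
  · -- Part (a)
    intro x hx
    set f : ℕ → ℝ := fun t => v (x t) - α (x t) * memory r x (x t) t with hf
    have h1le : ∀ t, 1 ≤ f t := by
      intro t
      have := hx t 0
      rw [hv0, hα0] at this
      simp only [hf]; linarith
    have hule : ∀ t, 10 - 10 * memory r x 1 t ≤ f t := by
      intro t
      have := hx t 1
      rw [hv1, hα1] at this
      simp only [hf]; linarith
    have hf0 : ∀ t, x t = 0 → f t = 1 := by
      intro t h
      simp only [hf, h, hv0, hα0]; ring
    have hf1 : ∀ t, x t = 1 → f t = 10 - 10 * memory r x 1 t := by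
      intro t h
      simp only [hf, h, hv1, hα1]
    -- key invariant
    have hmax : ∀ t, 10 - 10 * memory r x 1 t ≤ max (1 + 9 * r) (10 * (1 - r) ^ t) := by
      intro t
      induction t with
      | zero =>
        refine le_trans ?_ (le_max_right _ _)
        simp [memory]
      | succ t ih =>
        have hm : memory r x 1 (t + 1)
            = (1 - r) * memory r x 1 t + r * (if x t = 1 then 1 else 0) := rfl
        rcases fin2cases (x t) with h0 | h1
        · -- item 0 chosen: utility of 1 was at most 1
          have hu1 : 10 - 10 * memory r x 1 t ≤ 1 := by
            have := hule t
            rw [hf0 t h0] at this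
            linarith
          have hind : (if x t = 1 then (1:ℝ) else 0) = 0 := by
            rw [h0]; norm_num
          refine le_trans ?_ (le_max_left _ _)
          rw [hm, hind]
          nlinarith
        · have hind : (if x t = 1 then (1:ℝ) else 0) = 1 := by rw [h1]; norm_num
          have heq : 10 - 10 * memory r x 1 (t + 1)
              = (1 - r) * (10 - 10 * memory r x 1 t) := by
            rw [hm, hind]; ring
          rcases le_max_iff.mp ih with h | h
          · refine le_trans ?_ (le_max_left _ _)
            rw [heq]
            nlinarith
          · refine le_trans ?_ (le_max_right _ _)
            rw [heq, pow_succ]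
            nlinarith [mul_le_mul_of_nonneg_left h h1r.le]
    -- find the time after which utilities are small
    have htend : Tendsto (fun t : ℕ => 10 * (1 - r) ^ t) atTop (𝓝 0) := by
      have := (tendsto_pow_atTop_nhds_zero_of_lt_one h1r.le h1r').const_mul (10:ℝ)
      simpa using this
    obtain ⟨t₀, ht₀⟩ := eventually_atTop.mp
      (htend.eventually_lt_const (show (0:ℝ) < 1 + 9 * r by linarith))
    have hub : ∀ t, t₀ ≤ t → f t ≤ 1 + 9 * r := by
      intro t ht
      rcases fin2cases (x t) with h0 | h1
      · rw [hf0 t h0]; linarith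
      · rw [hf1 t h1]
        rcases le_max_iff.mp (hmax t) with h | h
        · exact h
        · exact le_trans h (ht₀ t ht).le
    set S : ℕ → ℝ := fun T => ∑ t ∈ Finset.range T, f t with hS
    change Filter.limsup (fun T : ℕ => S T / (T : ℝ)) Filter.atTop ≤ 1 + 9 * r
    clear_value f S
    have hsum : ∀ k : ℕ, S (t₀ + k) ≤ S t₀ + k * (1 + 9 * r) := by
      intro k
      induction k with
      | zero => simp
      | succ k ih =>
        have : S (t₀ + (k + 1)) = S (t₀ + k) + f (t₀ + k) := by
          simp only [hS, ← add_assoc, Finset.sum_range_succ]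
        rw [this]
        have := hub (t₀ + k) (Nat.le_add_right _ _)
        push_cast
        push_cast at ih
        linarith
    set D : ℝ := S t₀ - t₀ * (1 + 9 * r) with hD
    clear_value D
    have hfg : ∀ᶠ T : ℕ in atTop,
        S T / (T : ℝ) ≤ (1 + 9 * r) + D / (T : ℝ) := by
      rw [eventually_atTop]
      refine ⟨t₀ + 1, fun T hT => ?_⟩
      have hTpos : (0:ℝ) < T := by
        have : 1 ≤ T := le_trans (Nat.le_add_left _ _) hT
        exact_mod_cast Nat.lt_of_lt_of_le Nat.zero_lt_one this
      obtain ⟨k, rfl⟩ := Nat.exists_eq_add_of_le (le_trans (Nat.le_succ _) hT)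
      have hb : S (t₀ + k) ≤ (↑(t₀ + k) : ℝ) * (1 + 9 * r) + D := by
        have := hsum k
        push_cast
        push_cast at this
        linarith
      rw [div_le_iff₀ hTpos]
      have hne : ((t₀:ℝ) + (k:ℝ)) ≠ 0 := by push_cast at hTpos; linarith
      have : ((1 + 9 * r) + D / (↑(t₀ + k):ℝ)) * (↑(t₀ + k):ℝ)
          = (↑(t₀ + k) : ℝ) * (1 + 9 * r) + D := by
        push_cast
        field_simp
      rw [this]
      exact hb
    have htg : Tendsto (fun T : ℕ => (1 + 9 * r) + D / (T : ℝ)) atTop (𝓝 (1 + 9 * r)) := by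
      have := (tendsto_const_div_atTop_nhds_zero_nat D).const_add (1 + 9 * r)
      simpa using this
    have hcob : IsCoboundedUnder (· ≤ ·) atTop (fun T : ℕ => S T / (T : ℝ)) := by
      refine isCoboundedUnder_le_of_le atTop (x := 0) (fun T => ?_)
      simp only [hS]
      refine div_nonneg (Finset.sum_nonneg fun t _ => ?_) (Nat.cast_nonneg T)
      linarith [h1le t]
    calc limsup (fun T : ℕ => S T / (T : ℝ)) atTop
        ≤ limsup (fun T : ℕ => (1 + 9 * r) + D / (T : ℝ)) atTop :=
          limsup_le_limsup hfg hcob htg.isBoundedUnder_le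
      _ = 1 + 9 * r := htg.limsup_eq
  · -- Part (b)
    intro y hy
    set f : ℕ → ℝ := fun t => v (y t) - α (y t) * memory r y (y t) t with hf
    have heven : ∀ t, Even t → f t = 10 - 10 * memory r y 1 t := by
      intro t ht
      have : y t = 1 := by rw [hy t, if_pos ht]
      simp only [hf, this, hv1, hα1]
    have hodd : ∀ t, ¬Even t → f t = 1 := by
      intro t ht
      have : y t = 0 := by rw [hy t, if_neg ht]
      simp only [hf, this, hv0, hα0]; ring
    have hmem : ∀ k : ℕ, memory r y 1 (2 * k) ≤ (1 - r) / (2 - r) := by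
      intro k
      induction k with
      | zero => simp [memory]; positivity
      | succ k ih =>
        have e1 : y (2 * k) = 1 := by
          rw [hy, if_pos]; rw [Nat.even_iff]; omega
        have e2 : y (2 * k + 1) = 0 := by
          rw [hy, if_neg]; rw [Nat.even_iff]; omega
        have h2 : 2 * (k + 1) = (2 * k + 1) + 1 := by ring
        rw [h2]
        have hm2 : memory r y 1 (2 * k + 1 + 1)
            = (1 - r) * memory r y 1 (2 * k + 1) + r * (if y (2*k+1) = 1 then 1 else 0) := rfl
        have hm1 : memory r y 1 (2 * k + 1)
            = (1 - r) * memory r y 1 (2 * k) + r * (if y (2*k) = 1 then 1 else 0) := rfl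
        have i2 : (if y (2*k+1) = 1 then (1:ℝ) else 0) = 0 := by rw [e2]; norm_num
        have i1 : (if y (2*k) = 1 then (1:ℝ) else 0) = 1 := by rw [e1]; norm_num
        rw [hm2, i2, hm1, i1]
        rw [le_div_iff₀ h2r]
        have ih' : memory r y 1 (2 * k) * (2 - r) ≤ 1 - r := (le_div_iff₀ h2r).mp ih
        nlinarith [mul_le_mul_of_nonneg_left ih' h1r.le]
    set B : ℝ := (1 / 2) * (1 + 10 - 10 * (1 - r) / (2 - r)) with hB
    have hA : ∀ k : ℕ, 10 - 10 * (1 - r) / (2 - r) ≤ f (2 * k) := by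
      intro k
      rw [heven (2 * k) (by rw [Nat.even_iff]; omega)]
      have := hmem k
      rw [mul_div_assoc]
      nlinarith
    have hAB : B ≤ 10 - 10 * (1 - r) / (2 - r) := by
      rw [hB]; linarith
    set S : ℕ → ℝ := fun T => ∑ t ∈ Finset.range T, f t with hS
    change B ≤ Filter.liminf (fun T : ℕ => S T / (T : ℝ)) Filter.atTop
    clear_value f B S
    have hkey : ∀ k : ℕ, (2 * k : ℝ) * B ≤ S (2 * k) := by
      intro k
      induction k with
      | zero => simp [hS]
      | succ k ih =>
        have hs : S (2 * (k + 1)) = S (2 * k) + f (2 * k) + f (2 * k + 1) := by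
          have h2 : 2 * (k + 1) = (2 * k + 1) + 1 := by ring
          simp only [hS, h2, Finset.sum_range_succ]
        rw [hs, hodd (2 * k + 1) (by rw [Nat.even_iff]; omega)]
        have hA' := hA k
        have h2B : 10 - 10 * (1 - r) / (2 - r) + 1 = 2 * B := by rw [hB]; ring
        have hexp : 2 * ((k:ℝ) + 1) * B = 2 * (k:ℝ) * B + 2 * B := by ring
        push_cast
        rw [hexp]
        linarith
    have hall : ∀ T : ℕ, (T : ℝ) * B ≤ S T := by
      intro T
      rcases Nat.even_or_odd T with ⟨k, hk⟩ | ⟨k, hk⟩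
      · have : T = 2 * k := by omega
        subst this
        have := hkey k
        push_cast
        push_cast at this
        linarith
      · have : T = 2 * k + 1 := by omega
        subst this
        have hs : S (2 * k + 1) = S (2 * k) + f (2 * k) := by
          simp only [hS, Finset.sum_range_succ]
        rw [hs]
        have := hkey k
        have hA' := hA k
        have hexp : (2 * (k:ℝ) + 1) * B = 2 * (k:ℝ) * B + B := by ring
        push_cast
        rw [hexp]
        linarith
    refine le_liminf_of_le ?_ ?_
    · refine isCoboundedUnder_ge_of_eventually_le atTop (x := 10) ?_
      refine Eventually.of_forall (fun T => ?_)
      have hfle : ∀ t, f t ≤ 10 := by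
        intro t
        rcases Nat.even_or_odd t with ht | ht
        · rw [heven t ht]
          have := memory_nonneg hr0.le (by linarith) y 1 t
          linarith
        · rw [hodd t (Nat.not_even_iff_odd.mpr ht)]; norm_num
      rcases Nat.eq_zero_or_pos T with h | h
      · subst h; simp [hS]
      · have hTpos : (0:ℝ) < T := by exact_mod_cast h
        rw [div_le_iff₀ hTpos]
        simp only [hS]
        calc (∑ t ∈ Finset.range T, f t) ≤ ∑ t ∈ Finset.range T, (10:ℝ) :=
              Finset.sum_le_sum fun t _ => hfle t
          _ = 10 * T := by simp [mul_comm]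
    · rw [eventually_atTop]
      refine ⟨1, fun T hT => ?_⟩
      have hTpos : (0:ℝ) < T := by exact_mod_cast hT
      rw [le_div_iff₀ hTpos]
      calc B * T = (T:ℝ) * B := by ring
        _ ≤ S T := hall T
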